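/- If there exists K > 0 such that τ̂(x) + τ̂(y) − τ̂(x+y) ≥ K·(‖x‖ + ‖y‖ − ‖x+y‖) for all x, y ∈ ℝ², then W has no corner: for every y* ∈ W there is at most one unit vector x̂ with ⟨y*, x̂⟩ = τ̂(x̂). -/
import Mathlib

open scoped RealInnerProductSpace

/-- The sharp triangle inequality implies that `W` has no corner: each
point of `W` is in duality with at most one unit vector. -/
theorem no_corner_of_sharp_triangle
    (W : Set (EuclideanSpace ℝ (Fin 2)))
    (hWcompact : IsCompact W) (hWconvex : Convex ℝ W)
    (hW0 : (0 : EuclideanSpace ℝ (Fin 2)) ∈ interior W)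
    (τ : EuclideanSpace ℝ (Fin 2) → ℝ)
    (hτ : ∀ x, τ x = sSup ((fun y => ⟪y, x⟫) '' W))
    (hSTI : ∃ K > (0 : ℝ), ∀ x y : EuclideanSpace ℝ (Fin 2),
      τ x + τ y - τ (x + y) ≥ K * (‖x‖ + ‖y‖ - ‖x + y‖)) :
    ∀ ys ∈ W, ∀ xh₁ xh₂ : EuclideanSpace ℝ (Fin 2), ‖xh₁‖ = 1 → ‖xh₂‖ = 1 →
      ⟪ys, xh₁⟫ = τ xh₁ → ⟪ys, xh₂⟫ = τ xh₂ → xh₁ = xh₂ := by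
  intro ys hys xh₁ xh₂ h1 h2 hd1 hd2
  obtain ⟨K, hK, hsti⟩ := hSTI
  -- τ (xh₁ + xh₂) ≥ ⟪ys, xh₁ + xh₂⟫
  have hbdd : BddAbove ((fun y => ⟪y, xh₁ + xh₂⟫) '' W) := by
    have : Continuous fun y : EuclideanSpace ℝ (Fin 2) => ⟪y, xh₁ + xh₂⟫ :=
      continuous_id.inner continuous_const
    exact (hWcompact.image this).bddAbove
  have hle : ⟪ys, xh₁ + xh₂⟫ ≤ τ (xh₁ + xh₂) := by
    rw [hτ]
    exact le_csSup hbdd ⟨ys, hys, rfl⟩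
  have key := hsti xh₁ xh₂
  rw [h1, h2] at key
  have hinner : ⟪ys, xh₁⟫ + ⟪ys, xh₂⟫ = ⟪ys, xh₁ + xh₂⟫ := (inner_add_right ys xh₁ xh₂).symm
  have hnonpos : τ xh₁ + τ xh₂ - τ (xh₁ + xh₂) ≤ 0 := by
    rw [← hd1, ← hd2]; linarith [hinner, hle]
  have : K * (1 + 1 - ‖xh₁ + xh₂‖) ≤ 0 := le_trans key hnonpos
  have hn2 : (2 : ℝ) ≤ ‖xh₁ + xh₂‖ := by nlinarith
  have hn2' : ‖xh₁ + xh₂‖ ≤ 2 := by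
    calc ‖xh₁ + xh₂‖ ≤ ‖xh₁‖ + ‖xh₂‖ := norm_add_le _ _
    _ = 2 := by rw [h1, h2]; norm_num
  have heq : ‖xh₁ + xh₂‖ = 2 := le_antisymm hn2' hn2
  have hsq : ‖xh₁ + xh₂‖ ^ 2 = 2 + 2 * ⟪xh₁, xh₂⟫ := by
    rw [@norm_add_sq_real]
    rw [h1, h2]; ring
  have : ⟪xh₁, xh₂⟫ = 1 := by rw [heq] at hsq; nlinarith
  exact (inner_eq_one_iff_of_norm_eq_one h1 h2).mp this
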